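/- The family of morphisms δ_A := D(τ_A⁻¹) ∘ ε_{i_*(i^*(A))} ∘ φ(γ_A⁻¹) ∘ σ_{D(A)} : ψ(D(A)) → D(ψ(A)) consists of isomorphisms and is natural in A; that is, δ defines a natural isomorphism ψ ∘ D ≅ D ∘ ψᵒᵖ of functors Cᵒᵖ ⥤ C. -/
import Mathlib


open CategoryTheory Opposite

universe v v' u u'

variable {C : Type u} [Category.{v} C] {C' : Type u'} [Category.{v'} C']

/-- The morphism `σ_A := can_{i_!(i^*(A))} ∘ π_A : ψ(A) ⟶ φ(i_!(i^*(A)))`,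
where `π_A = (ψ(β_A))⁻¹`. -/
noncomputable def sigmaMap (istar : C ⥤ C') (ishriek : C' ⥤ C)
    (adjS : ishriek ⊣ istar) (ψ φ : C ⥤ C) (can : ψ ⟶ φ)
    [∀ A : C, IsIso (ψ.map (adjS.counit.app A))] (A : C) :
    ψ.obj A ⟶ φ.obj (ishriek.obj (istar.obj A)) :=
  inv (ψ.map (adjS.counit.app A)) ≫ can.app (ishriek.obj (istar.obj A))

/-- The morphism `τ_A := ρ_A ∘ var_{i_*(i^*(A))} : φ(i_*(i^*(A))) ⟶ ψ(A)`,
where `ρ_A = (ψ(α_A))⁻¹`. -/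
noncomputable def tauMap (istar : C ⥤ C') (ipush : C' ⥤ C)
    (adjP : istar ⊣ ipush) (ψ φ : C ⥤ C) (var : φ ⟶ ψ)
    [∀ A : C, IsIso (ψ.map (adjP.unit.app A))] (A : C) :
    φ.obj (ipush.obj (istar.obj A)) ⟶ ψ.obj A :=
  var.app (ipush.obj (istar.obj A)) ≫ inv (ψ.map (adjP.unit.app A))

instance sigmaMap_isIso (istar : C ⥤ C') (ishriek : C' ⥤ C)
    (adjS : ishriek ⊣ istar) (ψ φ : C ⥤ C) (can : ψ ⟶ φ)
    [∀ A : C, IsIso (ψ.map (adjS.counit.app A))]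
    [∀ A : C, IsIso (can.app (ishriek.obj (istar.obj A)))] (A : C) :
    IsIso (sigmaMap istar ishriek adjS ψ φ can A) := by
  unfold sigmaMap; infer_instance

instance tauMap_isIso (istar : C ⥤ C') (ipush : C' ⥤ C)
    (adjP : istar ⊣ ipush) (ψ φ : C ⥤ C) (var : φ ⟶ ψ)
    [∀ A : C, IsIso (ψ.map (adjP.unit.app A))]
    [∀ A : C, IsIso (var.app (ipush.obj (istar.obj A)))] (A : C) :
    IsIso (tauMap istar ipush adjP ψ φ var A) := by
  unfold tauMap; infer_instance

/-- The morphism `δ_A := 𝒟(τ_A⁻¹) ∘ ε_{i_*(i^*(A))} ∘ φ(γ_A⁻¹) ∘ σ_{𝒟(A)} :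
ψ(𝒟(A)) ⟶ 𝒟(ψ(A))`. -/
noncomputable def deltaMap (istar : C ⥤ C') (ishriek ipush : C' ⥤ C)
    (adjS : ishriek ⊣ istar) (adjP : istar ⊣ ipush)
    (D : Cᵒᵖ ⥤ C) (ψ φ : C ⥤ C) (can : ψ ⟶ φ) (var : φ ⟶ ψ)
    [∀ A : C, IsIso (ψ.map (adjP.unit.app A))]
    [∀ A : C, IsIso (ψ.map (adjS.counit.app A))]
    [∀ A : C, IsIso (can.app (ishriek.obj (istar.obj A)))]
    [∀ A : C, IsIso (var.app (ipush.obj (istar.obj A)))]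
    (ε : D ⋙ φ ≅ φ.op ⋙ D)
    (γ : (istar ⋙ ipush).op ⋙ D ≅ D ⋙ istar ⋙ ishriek) (A : C) :
    ψ.obj (D.obj (op A)) ⟶ D.obj (op (ψ.obj A)) :=
  sigmaMap istar ishriek adjS ψ φ can (D.obj (op A)) ≫
    φ.map (γ.inv.app (op A)) ≫
      ε.hom.app (op (ipush.obj (istar.obj A))) ≫
        D.map (inv (tauMap istar ipush adjP ψ φ var A)).op

instance deltaMap_isIso (istar : C ⥤ C') (ishriek ipush : C' ⥤ C)
    (adjS : ishriek ⊣ istar) (adjP : istar ⊣ ipush)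
    (D : Cᵒᵖ ⥤ C) (ψ φ : C ⥤ C) (can : ψ ⟶ φ) (var : φ ⟶ ψ)
    [∀ A : C, IsIso (ψ.map (adjP.unit.app A))]
    [∀ A : C, IsIso (ψ.map (adjS.counit.app A))]
    [∀ A : C, IsIso (can.app (ishriek.obj (istar.obj A)))]
    [∀ A : C, IsIso (var.app (ipush.obj (istar.obj A)))]
    (ε : D ⋙ φ ≅ φ.op ⋙ D)
    (γ : (istar ⋙ ipush).op ⋙ D ≅ D ⋙ istar ⋙ ishriek) (A : C) :
    IsIso (deltaMap istar ishriek ipush adjS adjP D ψ φ can var ε γ A) := by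
  unfold deltaMap; infer_instance

/-- the family `δ_A := 𝒟(τ_A⁻¹) ∘ ε_{i_*(i^*(A))} ∘ φ(γ_A⁻¹) ∘ σ_{𝒟(A)}`
consists of isomorphisms and is natural in `A`, i.e. it defines a natural isomorphism
`ψ ∘ 𝒟 ≅ 𝒟 ∘ ψᵒᵖ` of functors `Cᵒᵖ ⥤ C`. -/
theorem deltaMap_isIso_and_natural (istar : C ⥤ C') (ishriek ipush : C' ⥤ C)
    (adjS : ishriek ⊣ istar) (adjP : istar ⊣ ipush)
    (D : Cᵒᵖ ⥤ C) [D.IsEquivalence] (ψ φ : C ⥤ C) (can : ψ ⟶ φ) (var : φ ⟶ ψ)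
    [∀ A : C, IsIso (ψ.map (adjP.unit.app A))]
    [∀ A : C, IsIso (ψ.map (adjS.counit.app A))]
    [∀ A : C, IsIso (can.app (ishriek.obj (istar.obj A)))]
    [∀ A : C, IsIso (var.app (ipush.obj (istar.obj A)))]
    (ε : D ⋙ φ ≅ φ.op ⋙ D)
    (γ : (istar ⋙ ipush).op ⋙ D ≅ D ⋙ istar ⋙ ishriek)
    (hγ : ∀ A : C, adjS.counit.app (D.obj (op A)) =
      γ.inv.app (op A) ≫ D.map (adjP.unit.app A).op) :
    (∀ A : C, IsIso (deltaMap istar ishriek ipush adjS adjP D ψ φ can var ε γ A)) ∧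
    (∀ (A B : C) (g : A ⟶ B),
      ψ.map (D.map g.op) ≫ deltaMap istar ishriek ipush adjS adjP D ψ φ can var ε γ A =
        deltaMap istar ishriek ipush adjS adjP D ψ φ can var ε γ B ≫
          D.map (ψ.map g).op) := by
  refine ⟨fun A => inferInstance, fun A B g => ?_⟩
  -- naturality of σ
  have hσ : ∀ {X Y : C} (h : X ⟶ Y), ψ.map h ≫ sigmaMap istar ishriek adjS ψ φ can Y =
      sigmaMap istar ishriek adjS ψ φ can X ≫ φ.map (ishriek.map (istar.map h)) := by
    intro X Y h
    have h1 : ψ.map (ishriek.map (istar.map h)) ≫ ψ.map (adjS.counit.app Y) =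
        ψ.map (adjS.counit.app X) ≫ ψ.map h := by
      rw [← ψ.map_comp, ← ψ.map_comp]
      exact congrArg ψ.map (adjS.counit.naturality h)
    have h2 : ψ.map h ≫ inv (ψ.map (adjS.counit.app Y)) =
        inv (ψ.map (adjS.counit.app X)) ≫ ψ.map (ishriek.map (istar.map h)) := by
      rw [← IsIso.inv_comp_eq, ← Category.assoc, IsIso.comp_inv_eq, h1, IsIso.inv_inv]
    simp only [sigmaMap]
    rw [Category.assoc, ← can.naturality, ← Category.assoc, h2, Category.assoc]
  -- naturality of τ
  have hτ : ∀ {X Y : C} (h : X ⟶ Y),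
      φ.map (ipush.map (istar.map h)) ≫ tauMap istar ipush adjP ψ φ var Y =
      tauMap istar ipush adjP ψ φ var X ≫ ψ.map h := by
    intro X Y h
    have h1 : ψ.map h ≫ ψ.map (adjP.unit.app Y) =
        ψ.map (adjP.unit.app X) ≫ ψ.map (ipush.map (istar.map h)) := by
      rw [← ψ.map_comp, ← ψ.map_comp]
      exact congrArg ψ.map (adjP.unit.naturality h)
    have h2 : ψ.map (ipush.map (istar.map h)) ≫ inv (ψ.map (adjP.unit.app Y)) =
        inv (ψ.map (adjP.unit.app X)) ≫ ψ.map h := by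
      rw [← IsIso.inv_comp_eq, ← Category.assoc, IsIso.comp_inv_eq, h1, IsIso.inv_inv]
    simp only [tauMap]
    rw [← Category.assoc, var.naturality, Category.assoc, h2, Category.assoc]
  -- inverted form of hτ, mapped through D
  have hτD : D.map (φ.map (ipush.map (istar.map g))).op ≫
      D.map (inv (tauMap istar ipush adjP ψ φ var A)).op =
      D.map (inv (tauMap istar ipush adjP ψ φ var B)).op ≫ D.map (ψ.map g).op := by
    have key : inv (tauMap istar ipush adjP ψ φ var A) ≫ φ.map (ipush.map (istar.map g)) =
        ψ.map g ≫ inv (tauMap istar ipush adjP ψ φ var B) := by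
      rw [IsIso.eq_comp_inv, Category.assoc, hτ g, IsIso.inv_hom_id_assoc]
    rw [← D.map_comp, ← D.map_comp, ← op_comp, ← op_comp, key]
  -- naturality of γ.inv at g.op
  have hγnat : φ.map (ishriek.map (istar.map (D.map g.op))) ≫ φ.map (γ.inv.app (op A)) =
      φ.map (γ.inv.app (op B)) ≫ φ.map (D.map (ipush.map (istar.map g)).op) := by
    rw [← φ.map_comp, ← φ.map_comp]
    exact congrArg φ.map (γ.inv.naturality g.op)
  -- naturality of ε.hom at (i_* i^* g).op
  have hεnat : φ.map (D.map (ipush.map (istar.map g)).op) ≫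
      ε.hom.app (op (ipush.obj (istar.obj A))) =
      ε.hom.app (op (ipush.obj (istar.obj B))) ≫
        D.map (φ.map (ipush.map (istar.map g))).op :=
    ε.hom.naturality (ipush.map (istar.map g)).op
  simp only [deltaMap]
  rw [← Category.assoc, hσ (D.map g.op), Category.assoc, ← Category.assoc (φ.map _),
    hγnat, Category.assoc, ← Category.assoc (φ.map (D.map _)), hεnat, Category.assoc,
    hτD]
  simp only [Category.assoc]
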